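/- Let M be an odd natural number, set M_e = (M+1)/2, let p_m be a real number with 0 ≤ p_m ≤ 1 and let N_a be a natural number. Define p_M = Σ_{k=M_e}^{M} C(M, k) · p_m^k · (1 − p_m)^{M − k} and L_M = 1 − (1 − p_M)^{N_a}. Then L_M ≤ N_a · C(M, M_e) · p_m^{M_e}. -/

import Mathlib

open Finset

/-- For odd `M`, `M_e = (M+1)/2`, per-measurement error probability `p_m` and `N_a`
    ancilla qubits, the probability `L_M = 1 - (1 - p_M)^{N_a}` that some ancilla's
    majority vote fails satisfies `L_M ≤ N_a · C(M, M_e) · p_m^{M_e}`. -/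
theorem measurement_error_bound (M Me Na : ℕ) (hM : Odd M) (hMe : Me = (M + 1) / 2)
    (pm : ℝ) (hpm0 : 0 ≤ pm) (hpm1 : pm ≤ 1) :
    1 - (1 - ∑ k ∈ Finset.Icc Me M,
          (Nat.choose M k : ℝ) * pm ^ k * (1 - pm) ^ (M - k)) ^ Na ≤
      (Na : ℝ) * (Nat.choose M Me : ℝ) * pm ^ Me := by
  obtain ⟨m, hm⟩ := hM
  have hMeM : Me ≤ M := by omega
  set q : ℝ := 1 - pm with hq
  have hq0 : 0 ≤ q := by linarith
  set p : ℝ := ∑ k ∈ Finset.Icc Me M,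
      (Nat.choose M k : ℝ) * pm ^ k * q ^ (M - k) with hp
  have hterm : ∀ k ∈ Finset.Icc Me M, (0:ℝ) ≤ (Nat.choose M k : ℝ) * pm ^ k * q ^ (M - k) :=
    fun k _ => by positivity
  have hp0 : 0 ≤ p := Finset.sum_nonneg hterm
  -- p ≤ 1 : sum over a subset of the full binomial sum
  have hp1 : p ≤ 1 := by
    have hsub : Finset.Icc Me M ⊆ Finset.range (M + 1) := by
      intro k hk
      simp only [Finset.mem_Icc] at hk
      simp only [Finset.mem_range]
      omega
    have h1 : p ≤ ∑ k ∈ Finset.range (M + 1), (Nat.choose M k : ℝ) * pm ^ k * q ^ (M - k) := by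
      refine Finset.sum_le_sum_of_subset_of_nonneg hsub fun k _ _ => by positivity
    have h2 : ∑ k ∈ Finset.range (M + 1), (Nat.choose M k : ℝ) * pm ^ k * q ^ (M - k) = 1 := by
      have := add_pow pm q M
      simp only [show pm + q = 1 by ring, one_pow] at this
      rw [this]
      exact Finset.sum_congr rfl fun k hk => by ring
    linarith
  -- key bound: p ≤ C(M, Me) * pm ^ Me
  have hkey : p ≤ (Nat.choose M Me : ℝ) * pm ^ Me := by
    have hstep : p ≤ ∑ k ∈ Finset.Icc Me M,
        (Nat.choose M Me : ℝ) * pm ^ Me *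
          ((Nat.choose (M - Me) (k - Me) : ℝ) * pm ^ (k - Me) * q ^ (M - k)) := by
      refine Finset.sum_le_sum fun k hk => ?_
      simp only [Finset.mem_Icc] at hk
      have hc : (Nat.choose M k : ℝ) ≤ (Nat.choose M Me : ℝ) * (Nat.choose (M - Me) (k - Me)) := by
        have hid : M.choose k * k.choose Me = M.choose Me * (M - Me).choose (k - Me) := Nat.choose_mul hk.1
        have : M.choose k ≤ M.choose k * k.choose Me := Nat.le_mul_of_pos_right _ (Nat.choose_pos hk.1)
        rw [hid] at this
        exact_mod_cast this
      have hpow : pm ^ k = pm ^ Me * pm ^ (k - Me) := by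
        rw [← pow_add]; congr 1; omega
      calc (Nat.choose M k : ℝ) * pm ^ k * q ^ (M - k)
          ≤ ((Nat.choose M Me : ℝ) * (Nat.choose (M - Me) (k - Me))) * pm ^ k * q ^ (M - k) := by
            have : (0:ℝ) ≤ pm ^ k * q ^ (M - k) := by positivity
            nlinarith
        _ = (Nat.choose M Me : ℝ) * pm ^ Me *
              ((Nat.choose (M - Me) (k - Me) : ℝ) * pm ^ (k - Me) * q ^ (M - k)) := by
            rw [hpow]; ring
    have hsum1 : ∑ k ∈ Finset.Icc Me M,
        (Nat.choose (M - Me) (k - Me) : ℝ) * pm ^ (k - Me) * q ^ (M - k) = 1 := by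
      rw [show Finset.Icc Me M = Finset.Ico Me (M + 1) by rfl, Finset.sum_Ico_eq_sum_range]
      have heq : ∀ j ∈ Finset.range (M + 1 - Me),
          (Nat.choose (M - Me) (Me + j - Me) : ℝ) * pm ^ (Me + j - Me) * q ^ (M - (Me + j))
          = (Nat.choose (M - Me) j : ℝ) * pm ^ j * q ^ ((M - Me) - j) := by
        intro j hj
        rw [show Me + j - Me = j by omega, show M - (Me + j) = M - Me - j by omega]
      rw [Finset.sum_congr rfl heq]
      have := add_pow pm q (M - Me)
      simp only [show pm + q = 1 by ring, one_pow] at this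
      rw [show M + 1 - Me = (M - Me) + 1 by omega, this]
      exact Finset.sum_congr rfl fun k hk => by ring
    calc p ≤ (Nat.choose M Me : ℝ) * pm ^ Me * ∑ k ∈ Finset.Icc Me M,
          (Nat.choose (M - Me) (k - Me) : ℝ) * pm ^ (k - Me) * q ^ (M - k) := by
            rw [Finset.mul_sum] at *; exact hstep
      _ = (Nat.choose M Me : ℝ) * pm ^ Me := by rw [hsum1, mul_one]
  -- Bernoulli: 1 - (1 - p)^Na ≤ Na * p
  have hbern : 1 - (1 - p) ^ Na ≤ (Na : ℝ) * p := by
    have := one_add_mul_le_pow (a := -p) (by linarith) Na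
    have h : 1 + (Na : ℝ) * (-p) ≤ (1 + (-p)) ^ Na := this
    have heq : (1 + (-p)) = (1 - p) := by ring
    rw [heq] at h
    linarith
  calc 1 - (1 - p) ^ Na ≤ (Na : ℝ) * p := hbern
    _ ≤ (Na : ℝ) * ((Nat.choose M Me : ℝ) * pm ^ Me) := by
        exact mul_le_mul_of_nonneg_left hkey (Nat.cast_nonneg Na)
    _ = (Na : ℝ) * (Nat.choose M Me : ℝ) * pm ^ Me := by ring
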